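/- Let n ≥ 2 and suppose λ_{i,j} ∈ F₂^{2n} (1 ≤ i ≤ n, j ∈ Z/mᵢ) satisfy the vertex nonsingularity condition: for every tuple (j₁,...,jₙ), the matrix with columns λ_{1,j₁}, λ_{1,j₁+1}, ..., λ_{n,jₙ}, λ_{n,jₙ+1} is invertible over F₂. Fix an index i and suppose there is a linear functional φ : F₂^{2n} → F₂ with φ(λ_{i,j}) = 1 for all j ∈ Z/mᵢ and φ(λ_{k,l}) equal to a prescribed value χ_i(k,l) which is 0 for all k ≠ i. Then mᵢ is even. -/

import Mathlib

/-- Under the vertex nonsingularity condition for vectors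
`λ_{i,j} ∈ F₂^{2n}` (coordinates indexed by `Fin n × Fin 2`, `j ∈ Z/mᵢ`
cyclic), if some linear functional `φ` satisfies `φ(λ_{i,j}) = 1` for all
`j` in a fixed factor `i`, and `φ(λ_{k,l}) = 0` for all `k ≠ i`, then `mᵢ`
is even. (This says: if the factor weight `χᵢ` lies in the row space of a
characteristic matrix over a product of polygons, then the `i`-th polygon has
an even number of sides.) -/
theorem stmt11 (n : ℕ) (hn : 2 ≤ n) (m : Fin n → ℕ)
    (lam : (i : Fin n) → ZMod (m i) → ((Fin n × Fin 2) → ZMod 2))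
    (hdet : ∀ j : (i : Fin n) → ZMod (m i),
      IsUnit (Matrix.of fun (r c : Fin n × Fin 2) =>
        lam c.1 (j c.1 + (c.2.val : ZMod (m c.1))) r))
    (i : Fin n)
    (φ : ((Fin n × Fin 2) → ZMod 2) →ₗ[ZMod 2] ZMod 2)
    (hφi : ∀ j : ZMod (m i), φ (lam i j) = 1)
    (hφk : ∀ k : Fin n, k ≠ i → ∀ l : ZMod (m k), φ (lam k l) = 0) :
    Even (m i) := by
  classical
  rcases Nat.even_or_odd (m i) with he | ho
  · exact he
  exfalso
  have addself : ∀ x : (Fin n × Fin 2) → ZMod 2, x + x = 0 := by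
    intro x
    have : x + x = (2 : ZMod 2) • x := by rw [two_smul]
    rw [this, show (2 : ZMod 2) = 0 by decide, zero_smul]
  -- the family of columns at the vertex with i-th coordinate `a` and other coordinates 0
  set F : ZMod (m i) → (Fin n × Fin 2) → ((Fin n × Fin 2) → ZMod 2) := fun a c =>
    lam c.1 (Function.update (fun k => (0 : ZMod (m k))) i a c.1 + (c.2.val : ZMod (m c.1)))
    with hF
  have hFi : ∀ a (t : Fin 2), F a (i, t) = lam i (a + (t.val : ZMod (m i))) := by
    intro a t; simp [hF, Function.update_self]
  have hFi0 : ∀ a, F a (i, 0) = lam i a := by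
    intro a; simp [hF, Function.update_self]
  have hFi1 : ∀ a, F a (i, 1) = lam i (a + 1) := by
    intro a; simp [hF, Function.update_self]
  have hFk : ∀ a, ∀ c : Fin n × Fin 2, c.1 ≠ i →
      F a c = lam c.1 ((c.2.val : ZMod (m c.1))) := by
    intro a c hc; simp [hF, Function.update_of_ne hc]
  have hindep : ∀ a : ZMod (m i), LinearIndependent (ZMod 2) (F a) := by
    intro a
    have h := (Matrix.linearIndependent_cols_iff_isUnit (K := ZMod 2)).2
      (hdet (Function.update (fun k => (0 : ZMod (m k))) i a))
    convert h using 1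
    ext c r; rfl
  -- W = span of the columns away from factor i
  set G : (Fin n × Fin 2) → ((Fin n × Fin 2) → ZMod 2) := fun c =>
    if c.1 = i then 0 else lam c.1 ((c.2.val : ZMod (m c.1))) with hG
  set W : Submodule (ZMod 2) ((Fin n × Fin 2) → ZMod 2) := Submodule.span (ZMod 2) (Set.range G) with hW
  -- Step 1: lam i a + lam i (a+1) is never in W
  have L1 : ∀ a : ZMod (m i), lam i a + lam i (a + 1) ∉ W := by
    intro a h
    rw [hW, Submodule.mem_span_range_iff_exists_fun] at h
    obtain ⟨c, hc⟩ := h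
    set g : (Fin n × Fin 2) → ZMod 2 := fun x => if x.1 = i then 1 else c x with hg
    have hsum : ∑ x : Fin n × Fin 2, g x • F a x = 0 := by
      have e : ∀ x : Fin n × Fin 2,
          g x • F a x = (if x.1 = i then F a x else 0) + c x • G x := by
        intro x
        by_cases hx : x.1 = i
        · simp [hg, hG, hx]
        · simp [hg, hG, hx, hFk a x hx]
      rw [Finset.sum_congr rfl fun x _ => e x, Finset.sum_add_distrib]
      have e1 : ∑ x : Fin n × Fin 2, (if x.1 = i then F a x else 0)
          = F a (i, 0) + F a (i, 1) := by
        rw [Fintype.sum_prod_type]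
        have : ∀ k : Fin n, (∑ t : Fin 2, if k = i then F a (k, t) else 0)
            = if k = i then F a (i, 0) + F a (i, 1) else 0 := by
          intro k
          by_cases hk : k = i
          · subst hk; simp [Fin.sum_univ_two]
          · simp [hk]
        rw [Finset.sum_congr rfl fun k _ => this k, Finset.sum_ite_eq' _ i]
        simp
      rw [e1, hc, hFi0, hFi1, addself]
    have := Fintype.linearIndependent_iff.1 (hindep a) g hsum (i, 0)
    simp [hg] at this
  -- the columns at the base vertex form a spanning set
  have hspan : ∀ u : (Fin n × Fin 2) → ZMod 2, u ∈ Submodule.span (ZMod 2) (Set.range (F 0)) := by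
    intro u
    have : Nonempty (Fin n × Fin 2) := ⟨(i, 0)⟩
    have hcard : Fintype.card (Fin n × Fin 2) = Module.finrank (ZMod 2) ((Fin n × Fin 2) → ZMod 2) := by
      rw [Module.finrank_fintype_fun_eq_card]
    rw [(hindep 0).span_eq_top_of_card_eq_finrank hcard]
    exact Submodule.mem_top
  set v : (Fin n × Fin 2) → ZMod 2 := lam i 0 + lam i 1 with hv
  -- Step 2: lam i a + lam i (a+1) ≡ v mod W
  have L2 : ∀ a : ZMod (m i), lam i a + lam i (a + 1) + v ∈ W := by
    intro a
    obtain ⟨c, hc⟩ := (Submodule.mem_span_range_iff_exists_fun (ZMod 2)).1 (hspan (lam i a + lam i (a + 1)))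
    -- applying φ shows c (i,0) = c (i,1)
    have hφF : ∀ x : Fin n × Fin 2, φ (F 0 x) = if x.1 = i then 1 else 0 := by
      intro x
      by_cases hx : x.1 = i
      · rcases x with ⟨k, t⟩
        simp only at hx; subst hx
        rw [hFi]; simp [hφi]
      · rw [hFk 0 x hx]; simp [hφk x.1 hx, hx]
    have hφsum : c (i, 0) + c (i, 1) = 0 := by
      have h1 : φ (∑ x : Fin n × Fin 2, c x • F 0 x) = 0 := by
        rw [hc, map_add, hφi, hφi]; decide
      rw [map_sum] at h1
      simp only [map_smul, hφF, smul_ite, smul_zero, smul_eq_mul, mul_one] at h1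
      rw [Fintype.sum_prod_type] at h1
      have e2 : ∀ k : Fin n, (∑ t : Fin 2, c (k, t) * if (k, t).1 = i then 1 else 0)
          = if k = i then c (i, 0) + c (i, 1) else 0 := by
        intro k
        by_cases hk : k = i
        · subst hk; simp [Fin.sum_univ_two]
        · simp [hk]
      rw [Finset.sum_congr rfl fun k _ => e2 k, Finset.sum_ite_eq' _ i] at h1
      simpa using h1
    have hc01 : c (i, 1) = c (i, 0) := by
      have h2 : c (i, 1) = -c (i, 0) := eq_neg_of_add_eq_zero_right hφsum
      rw [h2, show ∀ x : ZMod 2, -x = x from by decide]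
    set w : (Fin n × Fin 2) → ZMod 2 := ∑ x : Fin n × Fin 2, (if x.1 = i then 0 else c x) • G x with hw
    have hwW : w ∈ W := by
      apply Submodule.sum_mem
      intro x _
      exact Submodule.smul_mem _ _ (Submodule.subset_span (Set.mem_range_self x))
    have hu : lam i a + lam i (a + 1) = c (i, 0) • v + w := by
      rw [← hc]
      have e : ∀ x : Fin n × Fin 2, c x • F 0 x
          = (if x.1 = i then c x • F 0 x else 0) + (if x.1 = i then 0 else c x) • G x := by
        intro x
        by_cases hx : x.1 = i
        · simp [hG, hx]
        · simp [hG, hx, hFk 0 x hx]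
      rw [Finset.sum_congr rfl fun x _ => e x, Finset.sum_add_distrib, ← hw]
      congr 1
      rw [Fintype.sum_prod_type]
      have e2 : ∀ k : Fin n, (∑ t : Fin 2, if k = i then c (k, t) • F 0 (k, t) else 0)
          = if k = i then c (i, 0) • F 0 (i, 0) + c (i, 1) • F 0 (i, 1) else 0 := by
        intro k
        by_cases hk : k = i
        · subst hk; simp [Fin.sum_univ_two]
        · simp [hk]
      rw [Finset.sum_congr rfl fun k _ => e2 k, Finset.sum_ite_eq' _ i]
      simp only [Finset.mem_univ, if_true]
      rw [hFi0, hFi1, hc01, hv, smul_add, zero_add]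
    rcases show c (i, 0) = 0 ∨ c (i, 0) = 1 from by
        rcases (show ∀ x : ZMod 2, x = 0 ∨ x = 1 from by decide) (c (i, 0)) with h | h
        · exact Or.inl h
        · exact Or.inr h with h0 | h1
    · exfalso
      apply L1 a
      rw [hu, h0, zero_smul, zero_add]
      exact hwW
    · have huv : lam i a + lam i (a + 1) + v = w := by
        rw [hu, h1, one_smul]
        calc v + w + v = (v + v) + w := by abel
          _ = w := by rw [addself, zero_add]
      rw [huv]; exact hwW
  -- Step 3: telescope around the cycle
  have key : ∀ t : ℕ, lam i ((t : ZMod (m i))) + lam i 0 + (t : ZMod 2) • v ∈ W := by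
    intro t
    induction t with
    | zero => simp [addself]
    | succ t ih =>
      have h2 := L2 ((t : ZMod (m i)))
      have h3 := W.add_mem ih h2
      have e : lam i ((((t : ℕ) + 1 : ℕ)) : ZMod (m i)) + lam i 0
            + (((t : ℕ) + 1 : ℕ) : ZMod 2) • v
          = (lam i ((t : ZMod (m i))) + lam i 0 + (t : ZMod 2) • v)
            + (lam i ((t : ZMod (m i))) + lam i ((t : ZMod (m i)) + 1) + v) := by
        push_cast
        rw [add_smul, one_smul]
        calc lam i ((t : ZMod (m i)) + 1) + lam i 0 + ((t : ZMod 2) • v + v)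
            = (lam i ((t : ZMod (m i))) + lam i ((t : ZMod (m i))))
              + (lam i ((t : ZMod (m i)) + 1) + lam i 0 + ((t : ZMod 2) • v + v)) := by
              rw [addself, zero_add]
          _ = (lam i ((t : ZMod (m i))) + lam i 0 + (t : ZMod 2) • v)
              + (lam i ((t : ZMod (m i))) + lam i ((t : ZMod (m i)) + 1) + v) := by abel
      rw [e]
      exact h3
  -- conclude
  have hfin := key (m i)
  rw [ZMod.natCast_self, addself, zero_add] at hfin
  have hodd : ((m i : ℕ) : ZMod 2) = 1 := by
    obtain ⟨r, hr⟩ := ho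
    rw [hr]
    push_cast
    rw [show (2 : ZMod 2) = 0 from by decide]
    ring
  rw [hodd, one_smul] at hfin
  apply L1 0
  rw [zero_add]
  exact hfin
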